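/- Let X be a finite state space with Markov generator L, reversible probability measure π, and Markov semigroup P_t = e^{tL}. For a positive probability density f, the entropy H(P_t f) = Σ_x (P_t f)(x) log((P_t f)(x)) π(x) satisfies d/dt H(P_t f) = −Σ_x (P_t f)(x) Ψ_Υ(log(P_t f))(x) π(x). -/

import Mathlib

open NormedSpace

theorem entropy_alg {X : Type*} [Fintype X] (K : Matrix X X ℝ) (p u : X → ℝ)
    (hrow : ∀ x : X, ∑ y : X, K x y = 0)
    (hdb : ∀ x y : X, p x * K x y = p y * K y x)
    (hu : ∀ x, 0 < u x) :
    ∑ x : X, (Real.log (u x) + 1) * (K.mulVec u x) * p x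
      = -(∑ x : X, u x * (∑ y : X, K x y
            * (Real.exp (Real.log (u y) - Real.log (u x)) - 1
              - (Real.log (u y) - Real.log (u x)))) * p x) := by
  have hswap : ∀ F : X → X → ℝ,
      (∑ x : X, ∑ y : X, p x * K x y * F x y) = ∑ x : X, ∑ y : X, p x * K x y * F y x := by
    intro F
    calc (∑ x : X, ∑ y : X, p x * K x y * F x y)
        = ∑ x : X, ∑ y : X, p y * K y x * F x y :=
          Finset.sum_congr rfl fun x _ => Finset.sum_congr rfl fun y _ => by rw [hdb]
      _ = ∑ y : X, ∑ x : X, p y * K y x * F x y := Finset.sum_comm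
  have hzero : ∀ G : X → ℝ, (∑ x : X, ∑ y : X, p x * K x y * G x) = 0 := by
    intro G
    refine Finset.sum_eq_zero fun x _ => ?_
    have h : ∀ y : X, p x * K x y * G x = (p x * G x) * K x y := fun y => by ring
    simp_rw [h, ← Finset.mul_sum, hrow, mul_zero]
  have hL : (∑ x : X, (Real.log (u x) + 1) * (K.mulVec u x) * p x)
      = (∑ x : X, ∑ y : X, p x * K x y * (u y * Real.log (u x)))
        + ∑ x : X, ∑ y : X, p x * K x y * u y := by
    rw [← Finset.sum_add_distrib]
    refine Finset.sum_congr rfl fun x _ => ?_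
    rw [← Finset.sum_add_distrib]
    simp only [Matrix.mulVec, dotProduct]
    rw [Finset.mul_sum, Finset.sum_mul]
    exact Finset.sum_congr rfl fun y _ => by ring
  have hR : (∑ x : X, u x * (∑ y : X, K x y
        * (Real.exp (Real.log (u y) - Real.log (u x)) - 1
          - (Real.log (u y) - Real.log (u x)))) * p x)
      = ∑ x : X, ∑ y : X, (p x * K x y * u y - p x * K x y * u x
          - p x * K x y * (u x * Real.log (u y)) + p x * K x y * (u x * Real.log (u x))) := by
    refine Finset.sum_congr rfl fun x _ => ?_
    rw [Finset.mul_sum, Finset.sum_mul]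
    refine Finset.sum_congr rfl fun y _ => ?_
    rw [Real.exp_sub, Real.exp_log (hu y), Real.exp_log (hu x)]
    have hx : u x ≠ 0 := (hu x).ne'
    field_simp
    ring
  have ha : (∑ x : X, ∑ y : X, p x * K x y * u y) = 0 :=
    (hswap fun _ y => u y).trans (hzero u)
  have hb : (∑ x : X, ∑ y : X, p x * K x y * u x) = 0 := hzero u
  have hd : (∑ x : X, ∑ y : X, p x * K x y * (u x * Real.log (u x))) = 0 :=
    hzero fun x => u x * Real.log (u x)
  have hc : (∑ x : X, ∑ y : X, p x * K x y * (u x * Real.log (u y)))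
      = ∑ x : X, ∑ y : X, p x * K x y * (u y * Real.log (u x)) :=
    hswap fun x y => u x * Real.log (u y)
  rw [hL, hR]
  simp only [Finset.sum_add_distrib, Finset.sum_sub_distrib]
  rw [ha, hb, hd, hc]
  ring

/-- Entropy dissipation identity: on a finite state space with Markov generator matrix `K`
(off-diagonal entries nonnegative, row sums zero), reversible probability measure `p`, and
semigroup `P_t = e^{tK}`, the entropy `H(P_t f) = Σ_x (P_t f)(x) log((P_t f)(x)) p(x)` of a
positive probability density `f` satisfies
`d/dt H(P_t f) = - Σ_x (P_t f)(x) Ψ_Υ(log(P_t f))(x) p(x)`. -/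
theorem entropy_dissipation {X : Type*} [Fintype X] [DecidableEq X]
    (K : Matrix X X ℝ) (p : X → ℝ)
    (hoff : ∀ x y : X, x ≠ y → 0 ≤ K x y) (hrow : ∀ x : X, ∑ y : X, K x y = 0)
    (hp : ∀ x, 0 < p x) (hp1 : ∑ x : X, p x = 1)
    (hdb : ∀ x y : X, p x * K x y = p y * K y x)
    (f : X → ℝ) (hf : ∀ x, 0 < f x) (hf1 : ∑ x : X, f x * p x = 1)
    (hpos : ∀ t : ℝ, 0 ≤ t → ∀ x, 0 < (exp (t • K)).mulVec f x) :
    ∀ t : ℝ, 0 ≤ t →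
      HasDerivAt
        (fun s => ∑ x : X, (exp (s • K)).mulVec f x
          * Real.log ((exp (s • K)).mulVec f x) * p x)
        (-(∑ x : X, (exp (t • K)).mulVec f x
          * (∑ y : X, K x y
            * (Real.exp (Real.log ((exp (t • K)).mulVec f y)
                  - Real.log ((exp (t • K)).mulVec f x)) - 1
              - (Real.log ((exp (t • K)).mulVec f y)
                  - Real.log ((exp (t • K)).mulVec f x)))) * p x)) t := by
  intro t ht
  -- derivative of each coordinate of the semigroup action
  have hcoord : ∀ x : X, HasDerivAt (fun s : ℝ => (exp (s • K)).mulVec f x)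
      (K.mulVec ((exp (t • K)).mulVec f) x) t := by
    intro x
    letI : SeminormedRing (Matrix X X ℝ) := Matrix.linftyOpSemiNormedRing
    letI : NormedRing (Matrix X X ℝ) := Matrix.linftyOpNormedRing
    letI : NormedAlgebra ℝ (Matrix X X ℝ) := Matrix.linftyOpNormedAlgebra
    have hE : HasDerivAt (fun s : ℝ => exp (s • K)) (K * exp (t • K)) t :=
      hasDerivAt_exp_smul_const' K t
    let φ : Matrix X X ℝ →ₗ[ℝ] ℝ :=
      { toFun := fun M => M.mulVec f x
        map_add' := fun A B => by simp [Matrix.add_mulVec]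
        map_smul' := fun c A => by simp [Matrix.smul_mulVec] }
    have h := φ.toContinuousLinearMap.hasFDerivAt.comp_hasDerivAt t hE
    have h2 : K.mulVec ((exp (t • K)).mulVec f) x
        = φ.toContinuousLinearMap (K * exp (t • K)) := by
      show _ = (K * exp (t • K)).mulVec f x
      rw [← Matrix.mulVec_mulVec]
    rw [h2]
    exact h
  -- derivative of each summand of the entropy
  have hterm : ∀ x : X, HasDerivAt
      (fun s : ℝ => (exp (s • K)).mulVec f x * Real.log ((exp (s • K)).mulVec f x) * p x)
      ((Real.log ((exp (t • K)).mulVec f x) + 1)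
        * (K.mulVec ((exp (t • K)).mulVec f) x) * p x) t := by
    intro x
    have hlog := (Real.hasDerivAt_mul_log (hpos t ht x).ne').comp t (hcoord x)
    have := hlog.mul_const (p x)
    simpa [Function.comp] using this
  have hsum := HasDerivAt.sum (fun x (_ : x ∈ Finset.univ) => hterm x)
  rw [entropy_alg K p ((exp (t • K)).mulVec f) hrow hdb (hpos t ht)] at hsum
  simpa only [Finset.sum_fn] using hsum
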